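/- Let A = {|a_i⟩} and B = {|b_j⟩} be orthonormal bases of ℂ^d. Then Q_F(A,B) ≥ t₂^succ(A,B), where t₂^succ(A,B) = (1/4)[ min_{1≤i≤d} (1 − Σ_{j=1}^d |⟨a_i|b_j⟩|⁴) + min_{1≤j≤d} (1 − Σ_{i=1}^d |⟨a_i|b_j⟩|⁴) ] is the average Tsallis-T₂ entropic uncertainty bound for successive measurements. -/

import Mathlib

open Matrix
open scoped BigOperators ComplexOrder

/-- The inner product ⟨x|y⟩ on ℂ^d. -/
noncomputable def qinner {d : ℕ} (x y : Fin d → ℂ) : ℂ := star x ⬝ᵥ y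

/-- `a` is an orthonormal basis of ℂ^d (d orthonormal vectors). -/
def IsONB {d : ℕ} (a : Fin d → (Fin d → ℂ)) : Prop :=
  ∀ i j, qinner (a i) (a j) = if i = j then 1 else 0

/-- Measurement distribution p_ρ^B(j) = ⟨b_j|ρ|b_j⟩. -/
noncomputable def probB {d : ℕ} (ρ : Matrix (Fin d) (Fin d) ℂ)
    (b : Fin d → (Fin d → ℂ)) (j : Fin d) : ℝ :=
  (qinner (b j) (ρ *ᵥ b j)).re

/-- Distribution of a B-measurement after a non-selective A-measurement:
q_ρ^{A→B}(j) = Σ_i ⟨a_i|ρ|a_i⟩ |⟨a_i|b_j⟩|². -/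
noncomputable def probAB {d : ℕ} (ρ : Matrix (Fin d) (Fin d) ℂ)
    (a b : Fin d → (Fin d → ℂ)) (j : Fin d) : ℝ :=
  ∑ i, probB ρ a i * ‖qinner (a i) (b j)‖ ^ 2

/-- The set of values 1 − F(p_ρ^B, q_ρ^{A→B})² over density matrices ρ;
`Q_F(A→B)` is its supremum. -/
noncomputable def QFset {d : ℕ} (a b : Fin d → (Fin d → ℂ)) : Set ℝ :=
  {x | ∃ ρ : Matrix (Fin d) (Fin d) ℂ, ρ.PosSemidef ∧ ρ.trace = 1 ∧
    x = 1 - (∑ j, Real.sqrt (probB ρ b j * probAB ρ a b j)) ^ 2}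

lemma star_mul_self_re (z : ℂ) : (star z * z).re = ‖z‖ ^ 2 := by
  rw [Complex.star_def, Complex.conj_mul']
  simp [← Complex.ofReal_pow]

lemma qinner_swap {d : ℕ} (x y : Fin d → ℂ) : star (qinner x y) = qinner y x := by
  simp [qinner, dotProduct, Finset.mul_sum, mul_comm]

lemma norm_qinner_comm {d : ℕ} (x y : Fin d → ℂ) : ‖qinner x y‖ = ‖qinner y x‖ := by
  rw [← qinner_swap, norm_star]

/-- For the pure state ρ = |b_{j₀}⟩⟨b_{j₀}|, the value 1 − F² equals
`1 - ∑ i, ‖⟨a_i|b_{j₀}⟩‖⁴`, hence that value lies in `QFset a b`. -/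
lemma mem_QFset {d : ℕ} (a b : Fin d → (Fin d → ℂ))
    (ha : IsONB a) (hb : IsONB b) (j₀ : Fin d) :
    (1 - ∑ i, ‖qinner (a i) (b j₀)‖ ^ 4) ∈ QFset a b := by
  set x : Fin d → ℂ := b j₀ with hx
  set ρ : Matrix (Fin d) (Fin d) ℂ := Matrix.of (fun k l => x k * star (x l)) with hρ
  have hmv : ∀ y : Fin d → ℂ, ρ *ᵥ y = fun k => x k * qinner x y := by
    intro y; funext k
    simp [hρ, Matrix.mulVec, dotProduct, qinner, Finset.mul_sum, mul_assoc]
  have hq : ∀ z y : Fin d → ℂ, qinner z (ρ *ᵥ y) = qinner z x * qinner x y := by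
    intro z y
    rw [hmv]
    simp [qinner, dotProduct, Finset.sum_mul, mul_assoc]
  have hprobB : ∀ (c : Fin d → (Fin d → ℂ)) (j : Fin d),
      probB ρ c j = ‖qinner x (c j)‖ ^ 2 := by
    intro c j
    rw [probB, hq, ← qinner_swap, star_mul_self_re]
  refine ⟨ρ, ?_, ?_, ?_⟩
  · rw [Matrix.posSemidef_iff_dotProduct_mulVec]
    constructor
    · ext k l
      simp [hρ, Matrix.conjTranspose_apply, mul_comm]
    · intro y
      rw [show star y ⬝ᵥ ρ *ᵥ y = qinner y (ρ *ᵥ y) from rfl, hq, ← qinner_swap]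
      exact star_mul_self_nonneg _
  · have : ρ.trace = qinner x x := by
      simp [hρ, Matrix.trace, Matrix.diag, qinner, dotProduct, mul_comm]
    rw [this, hx, hb j₀ j₀, if_pos rfl]
  · have hpb : ∀ j, probB ρ b j = if j₀ = j then 1 else 0 := by
      intro j
      rw [hprobB, hx, hb j₀ j]
      split <;> simp
    have hsum : (∑ j, Real.sqrt (probB ρ b j * probAB ρ a b j))
        = Real.sqrt (probAB ρ a b j₀) := by
      rw [Finset.sum_eq_single j₀]
      · rw [hpb, if_pos rfl, one_mul]
      · intro j _ hj
        rw [hpb, if_neg (Ne.symm hj), zero_mul, Real.sqrt_zero]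
      · simp
    have hqab : probAB ρ a b j₀ = ∑ i, ‖qinner (a i) (b j₀)‖ ^ 4 := by
      rw [probAB]
      congr 1; funext i
      rw [hprobB, hx, norm_qinner_comm (b j₀) (a i)]
      ring
    have hnn : 0 ≤ ∑ i, ‖qinner (a i) (b j₀)‖ ^ 4 :=
      Finset.sum_nonneg fun i _ => by positivity
    rw [hsum, hqab, Real.sq_sqrt hnn]

lemma QFset_bddAbove {d : ℕ} (a b : Fin d → (Fin d → ℂ)) : BddAbove (QFset a b) := by
  refine ⟨1, fun x hx => ?_⟩
  obtain ⟨ρ, _, _, rfl⟩ := hx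
  have : (0:ℝ) ≤ (∑ j, Real.sqrt (probB ρ b j * probAB ρ a b j)) ^ 2 := sq_nonneg _
  linarith

theorem QF_ge_tsallis_succ_EUR {d : ℕ} (hd : 0 < d) (a b : Fin d → (Fin d → ℂ))
    (ha : IsONB a) (hb : IsONB b) :
    (1 / 4 : ℝ) * ((⨅ i : Fin d, (1 - ∑ j, ‖qinner (a i) (b j)‖ ^ 4))
        + (⨅ j : Fin d, (1 - ∑ i, ‖qinner (a i) (b j)‖ ^ 4)))
      ≤ (1 / 4 : ℝ) * (sSup (QFset a b) + sSup (QFset b a)) := by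
  have : Nonempty (Fin d) := ⟨⟨0, hd⟩⟩
  have hbdd1 : BddBelow (Set.range fun i : Fin d => (1 - ∑ j, ‖qinner (a i) (b j)‖ ^ 4)) :=
    (Set.finite_range _).bddBelow
  have hbdd2 : BddBelow (Set.range fun j : Fin d => (1 - ∑ i, ‖qinner (a i) (b j)‖ ^ 4)) :=
    (Set.finite_range _).bddBelow
  set i₀ : Fin d := ⟨0, hd⟩
  have h1 : (⨅ i : Fin d, (1 - ∑ j, ‖qinner (a i) (b j)‖ ^ 4)) ≤ sSup (QFset b a) := by
    refine le_trans (ciInf_le hbdd1 i₀) ?_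
    have hmem := mem_QFset b a hb ha i₀
    have heq : (1 - ∑ j, ‖qinner (b j) (a i₀)‖ ^ 4)
        = (1 - ∑ j, ‖qinner (a i₀) (b j)‖ ^ 4) := by
      congr 1
      exact Finset.sum_congr rfl fun j _ => by rw [norm_qinner_comm]
    rw [heq] at hmem
    exact le_csSup (QFset_bddAbove b a) hmem
  have h2 : (⨅ j : Fin d, (1 - ∑ i, ‖qinner (a i) (b j)‖ ^ 4)) ≤ sSup (QFset a b) := by
    refine le_trans (ciInf_le hbdd2 i₀) ?_
    exact le_csSup (QFset_bddAbove a b) (mem_QFset a b ha hb i₀)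
  linarith
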